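/- For 2×2 matrices: [[1,t1],[0,1]]·[[t2,0],[0,t3]]·[[1,0],[t4,1]] = [[1,0],[t1',1]]·[[t2',0],[0,t3']]·[[1,t4'],[0,1]], where T = t2 + t1·t3·t4, t1' = t3·t4/T, t2' = T, t3' = t2·t3/T, t4' = t1·t3/T, valid whenever t2, t3 are nonzero and T ≠ 0. -/

import Mathlib

/-- The basic commutation relation between elementary `2 × 2` Jacobi matrices:
`[[1,t₁],[0,1]]·[[t₂,0],[0,t₃]]·[[1,0],[t₄,1]]
  = [[1,0],[t₁',1]]·[[t₂',0],[0,t₃']]·[[1,t₄'],[0,1]]`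
with `T = t₂ + t₁t₃t₄`, `t₁' = t₃t₄/T`, `t₂' = T`, `t₃' = t₂t₃/T`,
`t₄' = t₁t₃/T`. -/
theorem stmt10 (t1 t2 t3 t4 : ℝ) (ht2 : t2 ≠ 0) (ht3 : t3 ≠ 0)
    (hT : t2 + t1 * t3 * t4 ≠ 0) :
    !![(1:ℝ), t1; 0, 1] * !![t2, 0; 0, t3] * !![1, 0; t4, 1] =
      !![(1:ℝ), 0; t3 * t4 / (t2 + t1 * t3 * t4), 1] *
        !![t2 + t1 * t3 * t4, 0; 0, t2 * t3 / (t2 + t1 * t3 * t4)] *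
        !![1, t1 * t3 / (t2 + t1 * t3 * t4); 0, 1] := by
  ext i j
  fin_cases i <;> fin_cases j <;>
    simp [Matrix.mul_apply, Fin.sum_univ_two] <;> field_simp <;> grind
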